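/- In the polynomial ring ℝ[t_{123}, t_{124}, t_{145}, t_{156}, t_{234}, t_{245}, t_{346}], the polynomial Q = t_{123}·t_{234}·t_{346} does not belong to the ideal generated by P1 = t_{123}·t_{234}·t_{245}·t_{156} and P2 = t_{123}·t_{346} − t_{245}·t_{156}, but Q² does belong to this ideal. -/
import Mathlib


open MvPolynomial

/-- In `ℝ[t₁₂₃, t₁₂₄, t₁₄₅, t₁₅₆, t₂₃₄, t₂₄₅, t₃₄₆]` (variables `X 0, …, X 6` in this
order), the polynomial `Q = t₁₂₃·t₂₃₄·t₃₄₆` is not in the ideal generated by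
`P₁ = t₁₂₃·t₂₃₄·t₂₄₅·t₁₅₆` and `P₂ = t₁₂₃·t₃₄₆ − t₂₄₅·t₁₅₆`, but `Q²` is. -/
theorem Q_not_mem_but_sq_mem :
    let t123 : MvPolynomial (Fin 7) ℝ := X 0
    let t124 : MvPolynomial (Fin 7) ℝ := X 1
    let t145 : MvPolynomial (Fin 7) ℝ := X 2
    let t156 : MvPolynomial (Fin 7) ℝ := X 3
    let t234 : MvPolynomial (Fin 7) ℝ := X 4
    let t245 : MvPolynomial (Fin 7) ℝ := X 5
    let t346 : MvPolynomial (Fin 7) ℝ := X 6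
    let I : Ideal (MvPolynomial (Fin 7) ℝ) :=
      Ideal.span {t123 * t234 * t245 * t156, t123 * t346 - t245 * t156}
    t123 * t234 * t346 ∉ I ∧ (t123 * t234 * t346) ^ 2 ∈ I := by
  intro t123 t124 t145 t156 t234 t245 t346 I
  constructor
  · intro h
    obtain ⟨u, v, huv⟩ := Ideal.mem_span_pair.mp h
    set f : Fin 7 → Polynomial ℝ := fun i => if i = 4 then 1 else Polynomial.X with hf
    have h2 := congrArg (MvPolynomial.aeval f) huv
    simp only [t123, t124, t145, t156, t234, t245, t346, map_add, map_mul, map_sub,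
      aeval_X, hf] at h2
    simp only [Fin.reduceEq, reduceIte] at h2
    have hdvd : (Polynomial.X : Polynomial ℝ) ^ 3 ∣ Polynomial.X * Polynomial.X := by
      refine ⟨MvPolynomial.aeval f u, ?_⟩
      simp only [← hf] at h2
      linear_combination -h2
    rw [Polynomial.X_pow_dvd_iff] at hdvd
    have := hdvd 2 (by norm_num)
    simp [Polynomial.coeff_X_pow] at this
  · rw [Ideal.mem_span_pair]
    exact ⟨t234 * t346, t123 * t234 ^ 2 * t346, by ring⟩
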